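/- For every odd positive root α ∈ Φ⁺ of gl(m|n), e'₀(f_α) = 1 if α = α₀ and e'₀(f_α) = 0 otherwise, where f_α is defined recursively by f_{α₀+...} via f_{β+α_k} = ad(f_k)(f_β) = f_k f_β − q^{−(α_k|β)} f_β f_k for k ≠ 0, starting from simple root vectors. -/

import Mathlib

noncomputable section

/-- The base field `ℚ(q)`. -/
abbrev KK : Type := RatFunc ℚ

/-- The indeterminate `q`. -/
noncomputable def qq : KK := RatFunc.X

/-- The integral weight lattice `P` of `gl(m|n)`. -/
abbrev Wt (m n : ℕ) := Fin (m + n) → ℤ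

/-- The basis weight `ε_a`. -/
def eps (m n : ℕ) (a : Fin (m + n)) : Wt m n := Pi.single a 1

/-- The supersymmetric bilinear form with `(ε_a|ε_b) = (−1)^{|a|} δ_{ab}`,
where `a` is even iff `a < m`. -/
def bil (m n : ℕ) (x y : Wt m n) : ℤ :=
  ∑ a : Fin (m + n), (if (a : ℕ) < m then 1 else -1) * x a * y a

/-- The index set `I` of simple roots of `gl(m|n)`. -/
abbrev Idx (m n : ℕ) := Fin (m + n - 1)

/-- The simple root `α_k = ε_k − ε_{k+1}`. -/
def alpha (m n : ℕ) (k : Idx m n) : Wt m n :=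
  eps m n ⟨k.1, lt_of_lt_of_le k.2 (Nat.sub_le _ _)⟩ -
    eps m n ⟨k.1 + 1, by have := k.2; omega⟩

/-- The index of the odd simple root `α₀ = ε_{bar 1} − ε_1`. -/
def zeroIdx (m n : ℕ) (hm : 0 < m) (hn : 0 < n) : Idx m n := ⟨m - 1, by omega⟩

/-- The monomial in the free algebra attached to a word. -/
def mono (m n : ℕ) (w : List (Idx m n)) : FreeAlgebra KK (Idx m n) :=
  (w.map (FreeAlgebra.ι KK)).prod

/-- The weight `β = −Σ α_{k_i}` of the monomial attached to a word. -/
def wtWord (m n : ℕ) (w : List (Idx m n)) : Wt m n := -(w.map (alpha m n)).sum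

/-- The twisting coefficient `(−1)^{|β|} q^{(α₀|β)}` for `β` the weight of the word `w`
(its parity being the number of odd letters in `w`). -/
def twist (m n : ℕ) (hm : 0 < m) (hn : 0 < n) (w : List (Idx m n)) : KK :=
  (-1 : KK) ^ (w.count (zeroIdx m n hm hn)) *
    qq ^ (bil m n (alpha m n (zeroIdx m n hm hn)) (wtWord m n w))


/-- The q-bracket adjoint action `ad(f_k)(u) = f_k u − q^{−(α_k|β)} u f_k`
for `u` a root vector of (positive) root `β`. -/
def adq (m n : ℕ) (k : Idx m n) (β : Wt m n) (u : FreeAlgebra KK (Idx m n)) :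
    FreeAlgebra KK (Idx m n) :=
  FreeAlgebra.ι KK k * u - qq ^ (-(bil m n (alpha m n k) β)) • (u * FreeAlgebra.ι KK k)

/-- Interpret a natural number (known to be in range) as an index in `I`. -/
def toIdx (m n : ℕ) (hmn : 0 < m + n - 1) (t : ℕ) : Idx m n :=
  ⟨t % (m + n - 1), Nat.mod_lt _ hmn⟩

/-- The sequence of simple indices used to build `f_α` for the odd root
`α = α_a + … + α_b` (with `a ≤ m−1 ≤ b`): first extend to the left from the odd simple
root, then to the right. -/
def rootChain (m : ℕ) (a b : ℕ) : List ℕ :=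
  (List.range' a (m - 1 - a)).reverse ++ List.range' m (b - (m - 1))

/-- The root vector `f_α` for the odd positive root `α = α_a + … + α_b`, built recursively
by `f_{β+α_k} = ad(f_k)(f_β) = f_k f_β − q^{−(α_k|β)} f_β f_k` starting from `f_{α₀}`. -/
def fRoot (m n : ℕ) (hm : 0 < m) (hn : 0 < n) (a b : ℕ) : FreeAlgebra KK (Idx m n) :=
  ((rootChain m a b).foldl
    (fun p t =>
      (adq m n (toIdx m n (by omega) t) p.2 p.1,
        p.2 + alpha m n (toIdx m n (by omega) t)))
    (FreeAlgebra.ι KK (zeroIdx m n hm hn), alpha m n (zeroIdx m n hm hn))).1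


lemma qq_ne_zero : (qq : KK) ≠ 0 := RatFunc.X_ne_zero

lemma bil_symm (m n : ℕ) (x y : Wt m n) : bil m n x y = bil m n y x := by
  unfold bil; apply Finset.sum_congr rfl; intros; ring

lemma bil_add_right (m n : ℕ) (x y z : Wt m n) :
    bil m n x (y + z) = bil m n x y + bil m n x z := by
  unfold bil; rw [← Finset.sum_add_distrib]; apply Finset.sum_congr rfl; intros
  simp only [Pi.add_apply]; split_ifs <;> ring

lemma bil_zero_right (m n : ℕ) (x : Wt m n) : bil m n x 0 = 0 := by
  unfold bil; simp

lemma bil_neg_right (m n : ℕ) (x y : Wt m n) : bil m n x (-y) = -bil m n x y := by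
  unfold bil
  have : -∑ a : Fin (m+n), (if (a : ℕ) < m then 1 else -1) * x a * y a
      = ∑ a : Fin (m+n), -((if (a : ℕ) < m then 1 else -1) * x a * y a) := by
    rw [Finset.sum_neg_distrib]
  rw [this]; apply Finset.sum_congr rfl; intros
  simp only [Pi.neg_apply]; split_ifs <;> ring

lemma mono_nil (m n : ℕ) : mono m n [] = 1 := rfl

lemma mono_cons (m n : ℕ) (k : Idx m n) (w : List (Idx m n)) :
    mono m n (k :: w) = FreeAlgebra.ι KK k * mono m n w := by
  simp [mono]

lemma mono_concat (m n : ℕ) (k : Idx m n) (w : List (Idx m n)) :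
    mono m n (w ++ [k]) = mono m n w * FreeAlgebra.ι KK k := by
  simp [mono]

lemma mono_single (m n : ℕ) (k : Idx m n) : mono m n [k] = FreeAlgebra.ι KK k := by
  simp [mono]

lemma wtWord_nil (m n : ℕ) : wtWord m n [] = 0 := by simp [wtWord]

lemma wtWord_cons (m n : ℕ) (k : Idx m n) (w : List (Idx m n)) :
    wtWord m n (k :: w) = -alpha m n k + wtWord m n w := by
  simp [wtWord]; abel

lemma twist_nil (m n : ℕ) (hm : 0 < m) (hn : 0 < n) : twist m n hm hn [] = 1 := by
  simp [twist, wtWord_nil, bil_zero_right]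

lemma twist_cons (m n : ℕ) (hm : 0 < m) (hn : 0 < n) (k : Idx m n)
    (hk : k ≠ zeroIdx m n hm hn) (w : List (Idx m n)) :
    twist m n hm hn (k :: w) =
      qq ^ (-(bil m n (alpha m n (zeroIdx m n hm hn)) (alpha m n k))) * twist m n hm hn w := by
  unfold twist
  rw [List.count_cons_of_ne (by simpa [eq_comm] using hk), wtWord_cons, bil_add_right,
    bil_neg_right, zpow_add₀ qq_ne_zero]
  ring

-- span lemma
def monoSubmonoid (m n : ℕ) : Submonoid (FreeAlgebra KK (Idx m n)) where
  carrier := Set.range (mono m n)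
  one_mem' := ⟨[], rfl⟩
  mul_mem' := by
    rintro _ _ ⟨w₁, rfl⟩ ⟨w₂, rfl⟩
    exact ⟨w₁ ++ w₂, by simp [mono]⟩

lemma mono_span (m n : ℕ) :
    Submodule.span KK (Set.range (mono m n)) = ⊤ := by
  rw [eq_top_iff]
  have h1 : Algebra.adjoin KK (Set.range (FreeAlgebra.ι KK : Idx m n → _)) = ⊤ :=
    FreeAlgebra.adjoin_range_ι KK (Idx m n)
  have h2 : (Submonoid.closure (Set.range (FreeAlgebra.ι KK : Idx m n → _)) : Set _) ⊆
      Set.range (mono m n) := by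
    have : Submonoid.closure (Set.range (FreeAlgebra.ι KK : Idx m n → _)) ≤
        monoSubmonoid m n := by
      rw [Submonoid.closure_le]
      rintro _ ⟨k, rfl⟩
      exact ⟨[k], mono_single m n k⟩
    exact this
  calc (⊤ : Submodule KK (FreeAlgebra KK (Idx m n)))
      = Subalgebra.toSubmodule (⊤ : Subalgebra KK (FreeAlgebra KK (Idx m n))) := rfl
    _ = Subalgebra.toSubmodule (Algebra.adjoin KK (Set.range (FreeAlgebra.ι KK : Idx m n → _))) := by
        rw [h1]
    _ = Submodule.span KK (Submonoid.closure (Set.range (FreeAlgebra.ι KK : Idx m n → _)) : Set _) :=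
        Algebra.adjoin_eq_span KK _
    _ ≤ Submodule.span KK (Set.range (mono m n)) := Submodule.span_mono h2

-- AUX END
section Elem
variable (m n : ℕ) (hm : 0 < m) (hn : 0 < n)
  (E : FreeAlgebra KK (Idx m n) →ₗ[KK] FreeAlgebra KK (Idx m n))
  (hE : ∀ w : List (Idx m n),
      E (mono m n w) = ∑ p : Fin w.length,
        if w.get p = zeroIdx m n hm hn then
          twist m n hm hn (w.take p) • mono m n (w.eraseIdx p)
        else 0)

include hE

lemma E_one : E 1 = 0 := by
  have h := hE []
  simpa [mono_nil] using h

lemma E_gen : E (FreeAlgebra.ι KK (zeroIdx m n hm hn)) = 1 := by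
  have h : E (mono m n [zeroIdx m n hm hn]) = ∑ p : Fin 1,
      if [zeroIdx m n hm hn].get p = zeroIdx m n hm hn then
        twist m n hm hn ([zeroIdx m n hm hn].take ↑p) •
          mono m n ([zeroIdx m n hm hn].eraseIdx ↑p)
      else 0 := hE [zeroIdx m n hm hn]
  rw [mono_single] at h
  rw [h, Fin.sum_univ_one]
  simp [List.get, twist_nil, mono_nil]

lemma E_mul_left (k : Idx m n) (hk : k ≠ zeroIdx m n hm hn)
    (u : FreeAlgebra KK (Idx m n)) :
    E (FreeAlgebra.ι KK k * u) =
      qq ^ (-(bil m n (alpha m n (zeroIdx m n hm hn)) (alpha m n k))) •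
        (FreeAlgebra.ι KK k * E u) := by
  have key : ∀ w : List (Idx m n), E (FreeAlgebra.ι KK k * mono m n w)
      = qq ^ (-(bil m n (alpha m n (zeroIdx m n hm hn)) (alpha m n k))) •
        (FreeAlgebra.ι KK k * E (mono m n w)) := by
    intro w
    have hcw : E (mono m n (k :: w)) = ∑ p : Fin (w.length + 1),
        if (k :: w).get p = zeroIdx m n hm hn then
          twist m n hm hn ((k :: w).take ↑p) • mono m n ((k :: w).eraseIdx ↑p)
        else 0 := hE (k :: w)
    rw [← mono_cons, hcw, hE, Fin.sum_univ_succ, Finset.mul_sum, Finset.smul_sum]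
    have h0 : ¬ ((k :: w).get (0 : Fin (w.length + 1)) = zeroIdx m n hm hn) := by
      simpa using hk
    rw [if_neg h0, zero_add]
    apply Finset.sum_congr rfl
    intro p _
    simp only [List.get_eq_getElem, Fin.val_succ, List.getElem_cons_succ,
      List.take_succ_cons, List.eraseIdx_cons_succ]
    split_ifs with hp
    · rw [twist_cons m n hm hn k hk, mono_cons, mul_smul_comm, smul_smul]
    · rw [mul_zero, smul_zero]
  have h : (E ∘ₗ LinearMap.mulLeft KK (FreeAlgebra.ι KK k)) =
      qq ^ (-(bil m n (alpha m n (zeroIdx m n hm hn)) (alpha m n k))) •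
        (LinearMap.mulLeft KK (FreeAlgebra.ι KK k) ∘ₗ E) := by
    apply LinearMap.ext_on (mono_span m n)
    rintro x ⟨w, rfl⟩
    simpa using key w
  have h2 := LinearMap.congr_fun h u
  simpa using h2

lemma E_mul_right (k : Idx m n) (hk : k ≠ zeroIdx m n hm hn)
    (u : FreeAlgebra KK (Idx m n)) :
    E (u * FreeAlgebra.ι KK k) = E u * FreeAlgebra.ι KK k := by
  have key : ∀ w : List (Idx m n), E (mono m n w * FreeAlgebra.ι KK k)
      = E (mono m n w) * FreeAlgebra.ι KK k := by
    intro w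
    rw [← mono_concat, hE, hE, Finset.sum_mul]
    have hlen : (w ++ [k]).length = w.length + 1 := by simp
    rw [← Fin.sum_congr' _ hlen.symm, Fin.sum_univ_castSucc]; try rfl
    have hlast : ¬ ((w ++ [k]).get (Fin.cast hlen.symm (Fin.last w.length))
        = zeroIdx m n hm hn) := by
      simp only [List.get_eq_getElem, Fin.coe_cast, Fin.val_last]
      rw [List.getElem_concat_length]
      exact hk
      rfl
    rw [if_neg hlast, add_zero]
    apply Finset.sum_congr rfl
    intro p _
    have hp1 : (p : ℕ) < w.length := p.2
    have hget : (w ++ [k]).get (Fin.cast hlen.symm p.castSucc) = w.get p := by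
      simp only [List.get_eq_getElem, Fin.coe_cast, Fin.coe_castSucc]
      exact List.getElem_append_left hp1
    have hcast : ((Fin.cast hlen.symm p.castSucc : Fin (w ++ [k]).length) : ℕ) = (p : ℕ) := by
      simp
    rw [hget, hcast, List.take_append_of_le_length (le_of_lt hp1),
      List.eraseIdx_append_of_lt_length hp1, mono_concat]
    by_cases hp : w.get p = zeroIdx m n hm hn
    · rw [if_pos hp, if_pos hp, smul_mul_assoc]
    · rw [if_neg hp, if_neg hp, zero_mul]
  have h : (E ∘ₗ LinearMap.mulRight KK (FreeAlgebra.ι KK k)) =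
      (LinearMap.mulRight KK (FreeAlgebra.ι KK k) ∘ₗ E) := by
    apply LinearMap.ext_on (mono_span m n)
    rintro x ⟨w, rfl⟩
    simpa using key w
  have h2 := LinearMap.congr_fun h u
  simpa using h2

lemma E_adq_zero (k : Idx m n) (hk : k ≠ zeroIdx m n hm hn) (β : Wt m n)
    (u : FreeAlgebra KK (Idx m n)) (hu : E u = 0) :
    E (adq m n k β u) = 0 := by
  unfold adq
  rw [map_sub, map_smul, E_mul_left m n hm hn E hE k hk, E_mul_right m n hm hn E hE k hk, hu]
  simp

omit hE in
lemma toIdx_ne_zeroIdx (hmn : 0 < m + n - 1) (t : ℕ) (ht1 : t < m + n - 1)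
    (ht2 : t ≠ m - 1) : toIdx m n hmn t ≠ zeroIdx m n hm hn := by
  intro h
  apply ht2
  have := congrArg Fin.val h
  simpa [toIdx, zeroIdx, Nat.mod_eq_of_lt ht1] using this

lemma fold_zero (hmn : 0 < m + n - 1) :
    ∀ (L : List ℕ), (∀ t ∈ L, t < m + n - 1 ∧ t ≠ m - 1) →
    ∀ (u : FreeAlgebra KK (Idx m n)) (β : Wt m n), E u = 0 →
    E ((L.foldl (fun p t => (adq m n (toIdx m n hmn t) p.2 p.1,
        p.2 + alpha m n (toIdx m n hmn t))) (u, β)).1) = 0 := by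
  intro L
  induction L with
  | nil => intro _ u β hu; simpa using hu
  | cons t L ih =>
    intro hL u β hu
    rw [List.foldl_cons]
    obtain ⟨ht1, ht2⟩ := hL t List.mem_cons_self
    exact ih (fun s hs => hL s (List.mem_cons_of_mem _ hs)) _ _
      (E_adq_zero m n hm hn E hE _ (toIdx_ne_zeroIdx m n hm hn hmn t ht1 ht2) _ _ hu)

end Elem

/-- for the twisted derivation `e'₀` (characterized on word monomials by the
explicit derivation formula) and every odd positive root `α = α_a + … + α_b` (with
`a ≤ m−1 ≤ b`), one has `e'₀(f_α) = 1` if `α = α₀` and `e'₀(f_α) = 0` otherwise. -/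

theorem stmt8 (m n : ℕ) (hm : 0 < m) (hn : 0 < n)
    (E : FreeAlgebra KK (Idx m n) →ₗ[KK] FreeAlgebra KK (Idx m n))
    (hE : ∀ w : List (Idx m n),
      E (mono m n w) = ∑ p : Fin w.length,
        if w.get p = zeroIdx m n hm hn then
          twist m n hm hn (w.take p) • mono m n (w.eraseIdx p)
        else 0) :
    ∀ a b : ℕ, a ≤ m - 1 → m - 1 ≤ b → b < m + n - 1 →
      E (fRoot m n hm hn a b) = if a = m - 1 ∧ b = m - 1 then 1 else 0 := by
  intro a b ha hb hbnd
  have hmn : 0 < m + n - 1 := by omega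
  have hchain : ∀ t ∈ rootChain m a b, t < m + n - 1 ∧ t ≠ m - 1 := by
    intro t ht
    unfold rootChain at ht
    rw [List.mem_append, List.mem_reverse] at ht
    rcases ht with h | h <;> rw [List.mem_range'_1] at h <;> omega
  by_cases hab : a = m - 1 ∧ b = m - 1
  · rw [if_pos hab]
    unfold fRoot
    have hce : rootChain m a b = [] := by
      unfold rootChain; rw [hab.1, hab.2]; simp
    rw [hce, List.foldl_nil]
    exact E_gen m n hm hn E hE
  · rw [if_neg hab]
    have hne : rootChain m a b ≠ [] := by
      unfold rootChain
      simp only [ne_eq, List.append_eq_nil_iff, List.reverse_eq_nil_iff, List.range'_eq_nil_iff]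
      omega
    obtain ⟨t, L, hTL⟩ := List.exists_cons_of_ne_nil hne
    have hchain' : ∀ s ∈ t :: L, s < m + n - 1 ∧ s ≠ m - 1 := hTL ▸ hchain
    obtain ⟨ht1, ht2⟩ := hchain' t List.mem_cons_self
    unfold fRoot
    rw [hTL, List.foldl_cons]
    refine fold_zero m n hm hn E hE hmn L
      (fun s hs => hchain' s (List.mem_cons_of_mem _ hs)) _ _ ?_
    have hk := toIdx_ne_zeroIdx m n hm hn hmn t ht1 ht2
    unfold adq
    rw [map_sub, map_smul, E_mul_left m n hm hn E hE _ hk, E_mul_right m n hm hn E hE _ hk,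
      E_gen m n hm hn E hE, mul_one, one_mul,
      bil_symm m n (alpha m n (toIdx m n hmn t)) (alpha m n (zeroIdx m n hm hn)), sub_self]

end
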